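/- Let B be an n×n matrix and A_H = I_{T+1} \otimes I_n - \Delta \otimes B. Then \|A_H^{-1}\| \leq \sqrt{\sum_{t=0}^{T} (T - t + 1) \|B^t\|^2}. Consequently, the condition number satisfies \kappa(A_H) \leq (\|B\| + 1) \sqrt{\sum_{t=0}^{T} (T - t + 1) \|B^t\|^2}. -/

import Mathlib

open Kronecker

/-- The spectral (operator) norm of a complex matrix. -/
noncomputable def opNorm {m n : Type*} [Fintype m] [Fintype n] [DecidableEq n]
    (M : Matrix m n ℂ) : ℝ :=
  ‖LinearMap.toContinuousLinearMap (Matrix.toEuclideanLin M)‖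

section Aux

open Matrix Finset

lemma opNorm_nonneg' {m n : Type*} [Fintype m] [Fintype n] [DecidableEq n]
    (M : Matrix m n ℂ) : 0 ≤ opNorm M := norm_nonneg _

lemma le_opN {m n : Type*} [Fintype m] [Fintype n] [DecidableEq n]
    (M : Matrix m n ℂ) (x : EuclideanSpace ℂ n) :
    ‖Matrix.toEuclideanLin M x‖ ≤ opNorm M * ‖x‖ := by
  simpa [opNorm] using (LinearMap.toContinuousLinearMap (Matrix.toEuclideanLin M)).le_opNorm x

lemma opN_le_bound {m n : Type*} [Fintype m] [Fintype n] [DecidableEq n]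
    (M : Matrix m n ℂ) {C : ℝ} (hC : 0 ≤ C)
    (h : ∀ x : EuclideanSpace ℂ n, ‖Matrix.toEuclideanLin M x‖ ≤ C * ‖x‖) :
    opNorm M ≤ C :=
  ContinuousLinearMap.opNorm_le_bound _ hC (by simpa using h)

lemma opNorm_zero' {m n : Type*} [Fintype m] [Fintype n] [DecidableEq n] :
    opNorm (0 : Matrix m n ℂ) = 0 := by
  simp [opNorm]

lemma opNorm_one_le' {n : Type*} [Fintype n] [DecidableEq n] :
    opNorm (1 : Matrix n n ℂ) ≤ 1 := by
  refine opN_le_bound _ zero_le_one fun x => ?_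
  rw [Matrix.toEuclideanLin_apply]
  simp [Matrix.one_mulVec]

lemma opNorm_sub_le' {m n : Type*} [Fintype m] [Fintype n] [DecidableEq n]
    (M N : Matrix m n ℂ) : opNorm (M - N) ≤ opNorm M + opNorm N := by
  unfold opNorm
  rw [map_sub, map_sub]
  exact norm_sub_le _ _

lemma euclid_norm_sq' {ι : Type*} [Fintype ι] (x : EuclideanSpace ℂ ι) :
    ‖x‖ ^ 2 = ∑ i, ‖x i‖ ^ 2 := by
  rw [EuclideanSpace.norm_eq, Real.sq_sqrt]; positivity

/-- The `c`-th block of a vector indexed by a product type. -/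
noncomputable def blk {m n : ℕ} (v : EuclideanSpace ℂ (Fin m × Fin n)) (c : Fin m) :
    EuclideanSpace ℂ (Fin n) :=
  (WithLp.equiv 2 (Fin n → ℂ)).symm fun j => v (c, j)

lemma norm_sq_blk {m n : ℕ} (v : EuclideanSpace ℂ (Fin m × Fin n)) :
    ∑ c, ‖blk v c‖ ^ 2 = ‖v‖ ^ 2 := by
  rw [euclid_norm_sq' v, Fintype.sum_prod_type]
  exact Finset.sum_congr rfl fun c _ => by rw [euclid_norm_sq']; rfl

lemma euclid_sum_apply {γ ι : Type*} [Fintype ι] (s : Finset γ)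
    (w : γ → EuclideanSpace ℂ ι) (i : ι) :
    (∑ c ∈ s, w c) i = ∑ c ∈ s, w c i := by rw [WithLp.ofLp_sum]; exact Finset.sum_apply i s _

/-- Core block estimate: row-wise bound for a block matrix. -/
lemma core_block {m n : ℕ} (Mb : Fin m → Fin m → Matrix (Fin n) (Fin n) ℂ)
    (M : Matrix (Fin m × Fin n) (Fin m × Fin n) ℂ)
    (hM : ∀ r i c j, M (r, i) (c, j) = Mb r c i j)
    (v : EuclideanSpace ℂ (Fin m × Fin n)) :
    ‖Matrix.toEuclideanLin M v‖ ^ 2 ≤ ∑ r, (∑ c, opNorm (Mb r c) * ‖blk v c‖) ^ 2 := by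
  rw [euclid_norm_sq', Fintype.sum_prod_type]
  refine Finset.sum_le_sum fun r _ => ?_
  have key : (WithLp.equiv 2 (Fin n → ℂ)).symm (fun i => Matrix.toEuclideanLin M v (r, i)) =
      ∑ c, Matrix.toEuclideanLin (Mb r c) (blk v c) := by
    apply PiLp.ext
    intro i
    rw [euclid_sum_apply]
    have lhs : Matrix.toEuclideanLin M v (r, i) = ∑ c, ∑ j, Mb r c i j * v (c, j) := by
      rw [Matrix.toEuclideanLin_apply]
      show (M *ᵥ (WithLp.equiv 2 _) v) (r, i) = _
      rw [Matrix.mulVec, dotProduct, Fintype.sum_prod_type]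
      exact Finset.sum_congr rfl fun c _ => Finset.sum_congr rfl fun j _ => by rw [hM]; rfl
    rw [show (WithLp.equiv 2 (Fin n → ℂ)).symm (fun i => Matrix.toEuclideanLin M v (r, i)) i
        = Matrix.toEuclideanLin M v (r, i) from rfl, lhs]
    refine Finset.sum_congr rfl fun c _ => ?_
    rw [Matrix.toEuclideanLin_apply]
    show _ = (Mb r c *ᵥ (WithLp.equiv 2 _) (blk v c)) i
    rw [Matrix.mulVec, dotProduct]
    rfl
  calc ∑ i, ‖Matrix.toEuclideanLin M v (r, i)‖ ^ 2
      = ‖(WithLp.equiv 2 (Fin n → ℂ)).symm (fun i => Matrix.toEuclideanLin M v (r, i))‖ ^ 2 := by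
        rw [euclid_norm_sq']; rfl
    _ = ‖∑ c, Matrix.toEuclideanLin (Mb r c) (blk v c)‖ ^ 2 := by rw [key]
    _ ≤ (∑ c, ‖Matrix.toEuclideanLin (Mb r c) (blk v c)‖) ^ 2 := by
        apply pow_le_pow_left₀ (norm_nonneg _) (norm_sum_le _ _)
    _ ≤ (∑ c, opNorm (Mb r c) * ‖blk v c‖) ^ 2 := by
        apply pow_le_pow_left₀ (Finset.sum_nonneg fun c _ => norm_nonneg _)
        exact Finset.sum_le_sum fun c _ => le_opN _ _

lemma tri_sum (a : ℕ → ℝ) (N : ℕ) :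
    ∑ r ∈ range N, ∑ t ∈ range (r + 1), a t = ∑ t ∈ range N, ((N - t : ℕ) : ℝ) * a t := by
  induction N with
  | zero => simp
  | succ N ih =>
    rw [Finset.sum_range_succ, ih]
    have h1 : ∑ t ∈ range (N + 1), ((N + 1 - t : ℕ) : ℝ) * a t
        = (∑ t ∈ range N, ((N - t : ℕ) : ℝ) * a t + ∑ t ∈ range N, a t) + a N := by
      rw [Finset.sum_range_succ]
      rw [← Finset.sum_add_distrib]
      congr 1
      · refine Finset.sum_congr rfl fun t ht => ?_
        have htN := Finset.mem_range.mp ht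
        have h2 : (N + 1 - t : ℕ) = (N - t : ℕ) + 1 := by omega
        rw [h2]
        push_cast
        ring
      · simp
    rw [h1, Finset.sum_range_succ]
    ring

lemma inner_reindex (a : ℕ → ℝ) (T r : ℕ) (hr : r ≤ T) :
    ∑ c ∈ range (T + 1), (if c ≤ r then a (r - c) else 0) = ∑ t ∈ range (r + 1), a t := by
  rw [← Finset.sum_subset (Finset.range_subset_range.mpr (by omega : r + 1 ≤ T + 1))
      (fun x _ hx => if_neg (by simp at hx ⊢; omega))]
  rw [← Finset.sum_range_reflect (fun t => a t) (r + 1)]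
  refine Finset.sum_congr rfl fun c hc => ?_
  have := Finset.mem_range.mp hc
  rw [if_pos (by omega)]
  congr 1

lemma sq_sum_ite_le {α : Type*} [Fintype α] (P : α → Prop) [DecidablePred P]
    (huniq : ∀ a b, P a → P b → a = b) (y : α → ℝ) :
    (∑ c, if P c then y c else 0) ^ 2 ≤ ∑ c, if P c then y c ^ 2 else 0 := by
  by_cases hex : ∃ c, P c
  · obtain ⟨c₀, hc₀⟩ := hex
    rw [Finset.sum_eq_single_of_mem c₀ (Finset.mem_univ _)
        (fun b _ hb => if_neg fun h => hb (huniq b c₀ h hc₀)),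
      Finset.sum_eq_single_of_mem c₀ (Finset.mem_univ _)
        (fun b _ hb => if_neg fun h => hb (huniq b c₀ h hc₀)),
      if_pos hc₀, if_pos hc₀]
  · rw [Finset.sum_eq_zero fun c _ => if_neg fun h => hex ⟨c, h⟩,
      Finset.sum_eq_zero fun c _ => if_neg fun h => hex ⟨c, h⟩]
    simp

lemma sum_ite_const_le {α : Type*} [Fintype α] (P : α → Prop) [DecidablePred P]
    (huniq : ∀ a b, P a → P b → a = b) {w : ℝ} (hw : 0 ≤ w) :
    (∑ r, if P r then w else 0) ≤ w := by
  by_cases hex : ∃ r, P r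
  · obtain ⟨r₀, hr₀⟩ := hex
    rw [Finset.sum_eq_single_of_mem r₀ (Finset.mem_univ _)
        (fun b _ hb => if_neg fun h => hb (huniq b r₀ h hr₀)), if_pos hr₀]
  · rw [Finset.sum_eq_zero fun r _ => if_neg fun h => hex ⟨r, h⟩]
    exact hw

end Aux

/-- **Upper bound on the condition number of `A_H`.** For `A_H = I_{T+1} ⊗ I_n - Δ ⊗ B`,
`‖A_H⁻¹‖ ≤ √(∑_{t=0}^{T} (T - t + 1)·‖B^t‖²)`, and consequently
`κ(A_H) = ‖A_H‖·‖A_H⁻¹‖ ≤ (‖B‖ + 1)·√(∑_{t=0}^{T} (T - t + 1)·‖B^t‖²)`. -/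
theorem condition_number_upper_bound (n T : ℕ) (B : Matrix (Fin n) (Fin n) ℂ)
    (Δ : Matrix (Fin (T + 1)) (Fin (T + 1)) ℂ)
    (hΔ : Δ = Matrix.of fun r c : Fin (T + 1) => if (r : ℕ) = (c : ℕ) + 1 then (1 : ℂ) else 0)
    (AH : Matrix (Fin (T + 1) × Fin n) (Fin (T + 1) × Fin n) ℂ)
    (hAH : AH = 1 - Δ ⊗ₖ B) :
    opNorm AH⁻¹ ≤
        Real.sqrt (∑ t ∈ Finset.range (T + 1), ((T : ℝ) - t + 1) * opNorm (B ^ t) ^ 2) ∧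
      opNorm AH * opNorm AH⁻¹ ≤
        (opNorm B + 1) *
          Real.sqrt (∑ t ∈ Finset.range (T + 1), ((T : ℝ) - t + 1) * opNorm (B ^ t) ^ 2) := by
  set S : ℝ := ∑ t ∈ Finset.range (T + 1), ((T : ℝ) - t + 1) * opNorm (B ^ t) ^ 2 with hSdef
  set a : ℕ → ℝ := fun t => opNorm (B ^ t) ^ 2 with ha
  -- powers of the shift matrix
  have hΔpow : ∀ t, Δ ^ t = Matrix.of fun r c : Fin (T + 1) =>
      if (r : ℕ) = (c : ℕ) + t then (1 : ℂ) else 0 := by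
    intro t
    induction t with
    | zero =>
      ext r c
      simp [Matrix.one_apply, Fin.ext_iff]
    | succ t ih =>
      ext r c
      rw [pow_succ, ih, hΔ, Matrix.mul_apply]
      simp only [Matrix.of_apply]
      by_cases hc : (c : ℕ) + 1 ≤ T
      · rw [Finset.sum_eq_single (⟨(c : ℕ) + 1, by omega⟩ : Fin (T + 1))]
        · simp only [Fin.val_mk]
          rw [if_pos trivial, mul_one]
          exact if_congr (by omega) rfl rfl
        · intro b _ hb
          have hb' : ¬((b : ℕ) = (c : ℕ) + 1) := fun h => hb (Fin.ext (by simpa using h))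
          simp [hb']
        · simp
      · rw [Finset.sum_eq_zero, if_neg (by omega)]
        intro k _
        have hk : ¬((k : ℕ) = (c : ℕ) + 1) := by omega
        simp [hk]
  -- formula for the inverse
  have hinv : AH⁻¹ = ∑ t ∈ Finset.range (T + 1), (Δ ^ t) ⊗ₖ (B ^ t) := by
    have hkpow : ∀ t : ℕ, (Δ ⊗ₖ B) ^ t = (Δ ^ t) ⊗ₖ (B ^ t) := by
      intro t
      induction t with
      | zero => simp [Matrix.one_kronecker_one]
      | succ t ih => rw [pow_succ, ih, pow_succ, pow_succ, Matrix.mul_kronecker_mul]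
    have hΔ0 : Δ ^ (T + 1) = 0 := by
      ext r c
      rw [hΔpow]
      simp only [Matrix.of_apply, Matrix.zero_apply]
      rw [if_neg (by omega)]
    apply Matrix.inv_eq_right_inv
    rw [hAH]
    have hg := mul_geom_sum (Δ ⊗ₖ B) (T + 1)
    have h0 : (Δ ⊗ₖ B) ^ (T + 1) = 0 := by rw [hkpow, hΔ0, Matrix.zero_kronecker]
    have hmain : (1 - Δ ⊗ₖ B) * ∑ i ∈ Finset.range (T + 1), (Δ ⊗ₖ B) ^ i = 1 := by
      have h1 : (1 - Δ ⊗ₖ B) * ∑ i ∈ Finset.range (T + 1), (Δ ⊗ₖ B) ^ i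
          = -((Δ ⊗ₖ B - 1) * ∑ i ∈ Finset.range (T + 1), (Δ ⊗ₖ B) ^ i) := by noncomm_ring
      rw [h1, hg, h0]
      simp
    rw [show (∑ t ∈ Finset.range (T + 1), (Δ ^ t) ⊗ₖ (B ^ t))
        = ∑ t ∈ Finset.range (T + 1), (Δ ⊗ₖ B) ^ t from
      Finset.sum_congr rfl fun t _ => (hkpow t).symm]
    exact hmain
  -- the blocks of the inverse
  have hEnt : ∀ (r : Fin (T + 1)) (i : Fin n) (c : Fin (T + 1)) (j : Fin n),
      AH⁻¹ (r, i) (c, j) =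
        (if (c : ℕ) ≤ (r : ℕ) then B ^ ((r : ℕ) - (c : ℕ)) else 0) i j := by
    intro r i c j
    rw [hinv, Matrix.sum_apply]
    have hterm : ∀ t, ((Δ ^ t) ⊗ₖ (B ^ t)) (r, i) (c, j)
        = if (r : ℕ) = (c : ℕ) + t then (B ^ t) i j else 0 := by
      intro t
      rw [Matrix.kroneckerMap_apply, hΔpow]
      simp only [Matrix.of_apply, ite_mul, one_mul, zero_mul]
    simp only [hterm]
    by_cases hcr : (c : ℕ) ≤ (r : ℕ)
    · rw [Finset.sum_eq_single_of_mem ((r : ℕ) - (c : ℕ)) (by simp; omega), if_pos (by omega),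
        if_pos hcr]
      intro t _ ht
      exact if_neg (by omega)
    · rw [Finset.sum_eq_zero (fun t _ => if_neg (by omega)), if_neg hcr]
      simp
  -- the sum of the squared block norms
  have hMbsq : ∀ (r c : Fin (T + 1)),
      opNorm (if (c : ℕ) ≤ (r : ℕ) then B ^ ((r : ℕ) - (c : ℕ)) else 0) ^ 2
        = if (c : ℕ) ≤ (r : ℕ) then a ((r : ℕ) - (c : ℕ)) else 0 := by
    intro r c
    by_cases h : (c : ℕ) ≤ (r : ℕ)
    · rw [if_pos h, if_pos h]
    · rw [if_neg h, if_neg h, opNorm_zero']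
      norm_num
  have hsum : (∑ r : Fin (T + 1), ∑ c : Fin (T + 1),
      opNorm (if (c : ℕ) ≤ (r : ℕ) then B ^ ((r : ℕ) - (c : ℕ)) else 0) ^ 2) = S := by
    simp only [hMbsq]
    have step1 : ∀ r : Fin (T + 1),
        (∑ c : Fin (T + 1), if (c : ℕ) ≤ (r : ℕ) then a ((r : ℕ) - (c : ℕ)) else 0)
          = ∑ c ∈ Finset.range (T + 1), (if c ≤ (r : ℕ) then a ((r : ℕ) - c) else 0) :=
      fun r => Fin.sum_univ_eq_sum_range (fun c => if c ≤ (r : ℕ) then a ((r : ℕ) - c) else 0) _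
    simp only [step1]
    rw [Fin.sum_univ_eq_sum_range (fun r =>
      ∑ c ∈ Finset.range (T + 1), (if c ≤ r then a (r - c) else 0)) (T + 1)]
    rw [Finset.sum_congr rfl fun r hr =>
      inner_reindex a T r (by have := Finset.mem_range.mp hr; omega)]
    rw [tri_sum a (T + 1)]
    refine Finset.sum_congr rfl fun t ht => ?_
    have htT := Finset.mem_range.mp ht
    have hcast : ((T + 1 - t : ℕ) : ℝ) = (T : ℝ) - t + 1 := by
      rw [Nat.cast_sub (by omega)]
      push_cast
      ring
    rw [hcast, ha]
  have hS0 : 0 ≤ S := by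
    rw [← hsum]
    refine Finset.sum_nonneg fun r _ => Finset.sum_nonneg fun c _ => ?_
    positivity
  -- Part 1: bound on the inverse
  have part1 : opNorm AH⁻¹ ≤ Real.sqrt S := by
    refine opN_le_bound _ (Real.sqrt_nonneg _) fun v => ?_
    have h2 : ‖Matrix.toEuclideanLin AH⁻¹ v‖ ^ 2 ≤ S * ‖v‖ ^ 2 := by
      calc ‖Matrix.toEuclideanLin AH⁻¹ v‖ ^ 2
          ≤ ∑ r : Fin (T + 1), (∑ c : Fin (T + 1),
              opNorm (if (c : ℕ) ≤ (r : ℕ) then B ^ ((r : ℕ) - (c : ℕ)) else 0)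
              * ‖blk v c‖) ^ 2 :=
            core_block (fun r c => if (c : ℕ) ≤ (r : ℕ) then B ^ ((r : ℕ) - (c : ℕ)) else 0)
              AH⁻¹ hEnt v
        _ ≤ ∑ r : Fin (T + 1), ((∑ c : Fin (T + 1),
              opNorm (if (c : ℕ) ≤ (r : ℕ) then B ^ ((r : ℕ) - (c : ℕ)) else 0) ^ 2)
              * ∑ c : Fin (T + 1), ‖blk v c‖ ^ 2) :=
            Finset.sum_le_sum fun r _ => Finset.sum_mul_sq_le_sq_mul_sq Finset.univ _ _
        _ = S * ‖v‖ ^ 2 := by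
            rw [← Finset.sum_mul, hsum, norm_sq_blk]
    calc ‖Matrix.toEuclideanLin AH⁻¹ v‖
        = Real.sqrt (‖Matrix.toEuclideanLin AH⁻¹ v‖ ^ 2) := (Real.sqrt_sq (norm_nonneg _)).symm
      _ ≤ Real.sqrt (S * ‖v‖ ^ 2) := Real.sqrt_le_sqrt h2
      _ = Real.sqrt S * ‖v‖ := by rw [Real.sqrt_mul hS0, Real.sqrt_sq (norm_nonneg _)]
  -- bound on ‖Δ ⊗ B‖
  have hEnt' : ∀ (r : Fin (T + 1)) (i : Fin n) (c : Fin (T + 1)) (j : Fin n),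
      (Δ ⊗ₖ B) (r, i) (c, j) = (if (r : ℕ) = (c : ℕ) + 1 then B else 0) i j := by
    intro r i c j
    rw [Matrix.kroneckerMap_apply, hΔ]
    simp only [Matrix.of_apply]
    by_cases h : (r : ℕ) = (c : ℕ) + 1 <;> simp [h]
  have hkron : opNorm (Δ ⊗ₖ B) ≤ opNorm B := by
    refine opN_le_bound _ (opNorm_nonneg' B) fun v => ?_
    have h2 : ‖Matrix.toEuclideanLin (Δ ⊗ₖ B) v‖ ^ 2 ≤ (opNorm B * ‖v‖) ^ 2 := by
      calc ‖Matrix.toEuclideanLin (Δ ⊗ₖ B) v‖ ^ 2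
          ≤ ∑ r : Fin (T + 1), (∑ c : Fin (T + 1),
              opNorm (if (r : ℕ) = (c : ℕ) + 1 then B else 0) * ‖blk v c‖) ^ 2 :=
            core_block (fun r c => if (r : ℕ) = (c : ℕ) + 1 then B else 0) (Δ ⊗ₖ B) hEnt' v
        _ = ∑ r : Fin (T + 1), (∑ c : Fin (T + 1),
              if (r : ℕ) = (c : ℕ) + 1 then opNorm B * ‖blk v c‖ else 0) ^ 2 := by
            refine Finset.sum_congr rfl fun r _ => ?_
            congr 1
            refine Finset.sum_congr rfl fun c _ => ?_
            by_cases h : (r : ℕ) = (c : ℕ) + 1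
            · rw [if_pos h, if_pos h]
            · rw [if_neg h, if_neg h, opNorm_zero', zero_mul]
        _ ≤ ∑ r : Fin (T + 1), ∑ c : Fin (T + 1),
              (if (r : ℕ) = (c : ℕ) + 1 then (opNorm B * ‖blk v c‖) ^ 2 else 0) :=
            Finset.sum_le_sum fun r _ =>
              sq_sum_ite_le (fun c : Fin (T + 1) => (r : ℕ) = (c : ℕ) + 1)
                (fun c c' h1 h2 => Fin.ext (by omega)) _
        _ = ∑ c : Fin (T + 1), ∑ r : Fin (T + 1),
              (if (r : ℕ) = (c : ℕ) + 1 then (opNorm B * ‖blk v c‖) ^ 2 else 0) :=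
            Finset.sum_comm
        _ ≤ ∑ c : Fin (T + 1), (opNorm B * ‖blk v c‖) ^ 2 :=
            Finset.sum_le_sum fun c _ =>
              sum_ite_const_le (fun r : Fin (T + 1) => (r : ℕ) = (c : ℕ) + 1)
                (fun r r' h1 h2 => Fin.ext (by omega)) (by positivity)
        _ = (opNorm B * ‖v‖) ^ 2 := by
            simp only [mul_pow]
            rw [← Finset.mul_sum, norm_sq_blk]
    calc ‖Matrix.toEuclideanLin (Δ ⊗ₖ B) v‖
        = Real.sqrt (‖Matrix.toEuclideanLin (Δ ⊗ₖ B) v‖ ^ 2) :=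
          (Real.sqrt_sq (norm_nonneg _)).symm
      _ ≤ Real.sqrt ((opNorm B * ‖v‖) ^ 2) := Real.sqrt_le_sqrt h2
      _ = opNorm B * ‖v‖ := Real.sqrt_sq (mul_nonneg (opNorm_nonneg' B) (norm_nonneg v))
  have hAHle : opNorm AH ≤ opNorm B + 1 := by
    rw [hAH]
    refine le_trans (opNorm_sub_le' 1 (Δ ⊗ₖ B)) ?_
    have h1 := opNorm_one_le' (n := Fin (T + 1) × Fin n)
    linarith
  exact ⟨part1, mul_le_mul hAHle part1 (opNorm_nonneg' _)
    (by linarith [opNorm_nonneg' B])⟩
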